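/- Let β > -1 and τ ∈ ℝ, and let Γ̂ be a closed smooth contour in ℂ \ {0} avoiding the branch cut of s^β. Then r(z) := ∫_{Γ̂} s^β e^{-τ/s + 1/(2s²) - zs} ds satisfies the adjoint ODE z r'''(z) + (β+3) r''(z) - τ r'(z) - r(z) = 0. -/

import Mathlib

open Complex intervalIntegral MeasureTheory Metric

/-- The "phase" (z-independent part of the exponent) of the contour integrand. -/
noncomputable def cfAux (β τ : ℝ) (γ : ℝ → ℂ) (u : ℝ) : ℂ :=
  (β:ℂ) * (Complex.log (-γ u) + (Real.pi:ℂ) * Complex.I) +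
    (-(τ:ℂ) / γ u + 1 / (2 * (γ u)^2))

/-- The integrand of the `k`-th derivative of the contour integral. -/
noncomputable def HAux (β τ : ℝ) (γ : ℝ → ℂ) (k : ℕ) (z : ℂ) (u : ℝ) : ℂ :=
  Complex.exp (cfAux β τ γ u - z * γ u) * ((-γ u)^k * deriv γ u)

/-- The `k`-th derivative of the contour integral. -/
noncomputable def RAux (β τ : ℝ) (γ : ℝ → ℂ) (k : ℕ) (z : ℂ) : ℂ :=
  ∫ u in (0:ℝ)..1, HAux β τ γ k z u

lemma cfAux_continuous (β τ : ℝ) (γ : ℝ → ℂ) (hγc : Continuous γ) (hne : ∀ u, γ u ≠ 0)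
    (hmem : ∀ u, -γ u ∈ Complex.slitPlane) : Continuous (cfAux β τ γ) := by
  have hlog : Continuous fun u => Complex.log (-γ u) := by
    rw [continuous_iff_continuousAt]
    intro u
    exact ContinuousAt.comp (g := Complex.log) (f := fun v => -γ v)
      (continuousAt_clog (hmem u)) (hγc.neg.continuousAt)
  have h2 : ∀ u, (2:ℂ) * (γ u)^2 ≠ 0 := fun u => by simp [hne u]
  exact (continuous_const.mul (hlog.add continuous_const)).add
    ((continuous_const.div hγc hne).add
      (continuous_const.div (continuous_const.mul (hγc.pow 2)) h2))

lemma HAux_continuous (β τ : ℝ) (γ : ℝ → ℂ) (hγ : ContDiff ℝ 1 γ) (hne : ∀ u, γ u ≠ 0)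
    (hmem : ∀ u, -γ u ∈ Complex.slitPlane) (k : ℕ) (z : ℂ) :
    Continuous (HAux β τ γ k z) :=
  (((cfAux_continuous β τ γ hγ.continuous hne hmem).sub
      (continuous_const.mul hγ.continuous)).cexp).mul
    (((hγ.continuous.neg).pow k).mul (hγ.continuous_deriv le_rfl))

lemma RAux_hasDerivAt (β τ : ℝ) (γ : ℝ → ℂ) (hγ : ContDiff ℝ 1 γ) (hne : ∀ u, γ u ≠ 0)
    (hmem : ∀ u, -γ u ∈ Complex.slitPlane) (k : ℕ) (z : ℂ) :
    HasDerivAt (RAux β τ γ k) (RAux β τ γ (k+1) z) z := by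
  have hc : ∀ (m : ℕ) (w : ℂ), Continuous (HAux β τ γ m w) :=
    fun m w => HAux_continuous β τ γ hγ hne hmem m w
  have hcf : Continuous (cfAux β τ γ) := cfAux_continuous β τ γ hγ.continuous hne hmem
  have key := intervalIntegral.hasDerivAt_integral_of_dominated_loc_of_deriv_le
    (μ := volume) (a := (0:ℝ)) (b := 1)
    (F := fun w u => HAux β τ γ k w u) (F' := fun w u => HAux β τ γ (k+1) w u)
    (x₀ := z)
    (bound := fun u => Real.exp ((cfAux β τ γ u - z * γ u).re + ‖γ u‖) *
      (‖γ u‖ ^ (k+1) * ‖deriv γ u‖))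
    (s := ball z 1) (ball_mem_nhds z one_pos)
    (Filter.Eventually.of_forall fun w => (hc k w).aestronglyMeasurable)
    ((hc k z).intervalIntegrable 0 1)
    ((hc (k+1) z).aestronglyMeasurable)
    ?_ ?_ ?_
  · exact key.2
  · -- bound
    refine ae_of_all _ fun t _ w hw => ?_
    have hnorm : ‖HAux β τ γ (k+1) w t‖ =
        Real.exp ((cfAux β τ γ t - w * γ t).re) * (‖γ t‖ ^ (k+1) * ‖deriv γ t‖) := by
      simp [HAux, Complex.norm_exp, map_mul, map_pow]
    rw [hnorm]
    have hre : (cfAux β τ γ t - w * γ t).re ≤ (cfAux β τ γ t - z * γ t).re + ‖γ t‖ := by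
      have hzw : ‖z - w‖ ≤ 1 := by
        have h1 : ‖w - z‖ < 1 := mem_ball_iff_norm.mp hw
        calc ‖z - w‖ = ‖w - z‖ := by rw [← norm_neg]; ring_nf
          _ ≤ 1 := h1.le
      have h2 : ((z - w) * γ t).re ≤ ‖γ t‖ := by
        calc ((z - w) * γ t).re ≤ ‖(z - w) * γ t‖ := Complex.re_le_norm _
          _ = ‖z - w‖ * ‖γ t‖ := norm_mul _ _
          _ ≤ 1 * ‖γ t‖ := mul_le_mul_of_nonneg_right hzw (norm_nonneg _)
          _ = ‖γ t‖ := one_mul _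
      have h3 : (cfAux β τ γ t - w * γ t).re =
          (cfAux β τ γ t - z * γ t).re + ((z - w) * γ t).re := by
        simp [Complex.sub_re, Complex.add_re, Complex.mul_re]; ring
      linarith
    exact mul_le_mul_of_nonneg_right (Real.exp_le_exp.mpr hre)
      (mul_nonneg (pow_nonneg (norm_nonneg _) _) (norm_nonneg _))
  · -- bound integrable
    apply Continuous.intervalIntegrable
    exact (Real.continuous_exp.comp
        ((Complex.continuous_re.comp (hcf.sub (continuous_const.mul hγ.continuous))).add
          hγ.continuous.norm)).mul
      ((hγ.continuous.norm.pow (k+1)).mul (hγ.continuous_deriv le_rfl).norm)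
  · -- differentiability in the parameter
    refine ae_of_all _ fun t _ w _ => ?_
    have hd : HasDerivAt (fun x : ℂ => cfAux β τ γ t - x * γ t) (-(1 * γ t)) w :=
      ((hasDerivAt_id w).mul_const (γ t)).const_sub (cfAux β τ γ t)
    have := (hd.cexp).mul_const ((-γ t)^k * deriv γ t)
    convert this using 1
    · rfl
    · rfl
    simp only [HAux]
    ring

lemma RAux_combination_eq_zero (β τ : ℝ) (γ : ℝ → ℂ) (hγ : ContDiff ℝ 1 γ)
    (hclosed : γ 0 = γ 1) (hne : ∀ u, γ u ≠ 0)
    (hmem : ∀ u, -γ u ∈ Complex.slitPlane) (z : ℂ) :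
    z * RAux β τ γ 3 z + ((β:ℂ) + 3) * RAux β τ γ 2 z
      - (τ:ℂ) * RAux β τ γ 1 z - RAux β τ γ 0 z = 0 := by
  have hc : ∀ (m : ℕ), Continuous (HAux β τ γ m z) :=
    fun m => HAux_continuous β τ γ hγ hne hmem m z
  have hint : ∀ (m : ℕ), IntervalIntegrable (HAux β τ γ m z) volume 0 1 :=
    fun m => (hc m).intervalIntegrable 0 1
  have hγd : ∀ v, HasDerivAt γ (deriv γ v) v :=
    fun v => (hγ.differentiable one_ne_zero v).hasDerivAt
  -- rewrite the combination as a single integral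
  have hcomb : z * RAux β τ γ 3 z + ((β:ℂ) + 3) * RAux β τ γ 2 z
      - (τ:ℂ) * RAux β τ γ 1 z - RAux β τ γ 0 z
      = ∫ u in (0:ℝ)..1, (z * HAux β τ γ 3 z u + ((β:ℂ) + 3) * HAux β τ γ 2 z u
          - (τ:ℂ) * HAux β τ γ 1 z u - HAux β τ γ 0 z u) := by
    simp only [RAux]
    rw [← intervalIntegral.integral_const_mul, ← intervalIntegral.integral_const_mul,
      ← intervalIntegral.integral_const_mul,
      ← intervalIntegral.integral_add ((hint 3).const_mul z) ((hint 2).const_mul _),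
      ← intervalIntegral.integral_sub
        (((hint 3).const_mul z).add ((hint 2).const_mul _)) ((hint 1).const_mul _),
      ← intervalIntegral.integral_sub
        ((((hint 3).const_mul z).add ((hint 2).const_mul _)).sub ((hint 1).const_mul _))
        (hint 0)]
  rw [hcomb]
  -- the integrand is the derivative of u ↦ exp(cf u - z γ u) * (γ u)^3
  have hkey : ∀ u : ℝ, HasDerivAt (fun v => Complex.exp (cfAux β τ γ v - z * γ v) * (γ v)^3)
      (z * HAux β τ γ 3 z u + ((β:ℂ) + 3) * HAux β τ γ 2 z u
        - (τ:ℂ) * HAux β τ γ 1 z u - HAux β τ γ 0 z u) u := by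
    intro u
    have h0 : γ u ≠ 0 := hne u
    have h2ne : (2:ℂ) * (γ u)^2 ≠ 0 := by simp [h0]
    have hlog : HasDerivAt (fun v => Complex.log (-γ v)) ((-(deriv γ u)) * (-γ u)⁻¹) u := by
      simpa [Function.comp_def, Pi.neg_apply, smul_eq_mul] using
        (Complex.hasDerivAt_log (hmem u)).scomp (x := u) ((hγd u).neg)
    have hpow : ∀ (n : ℕ), HasDerivAt (fun v => γ v ^ n)
        ((deriv γ u) • ((n:ℂ) * γ u ^ (n-1))) u :=
      fun n => (hasDerivAt_pow n (γ u)).scomp (x := u) (hγd u)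
    have hcf := ((hlog.add_const ((Real.pi:ℂ) * Complex.I)).const_mul (β:ℂ)).add
      (((hasDerivAt_const u (-(τ:ℂ))).div (hγd u) h0).add
        ((hasDerivAt_const u (1:ℂ)).div ((hpow 2).const_mul 2) h2ne))
    have hG := ((hcf.sub ((hγd u).const_mul z)).cexp).mul (hpow 3)
    convert hG using 1
    · rfl
    · rfl
    simp only [HAux, cfAux, smul_eq_mul]
    generalize Complex.exp ((β:ℂ) * (Complex.log (-γ u) + (Real.pi:ℂ) * Complex.I) +
      (-(τ:ℂ) / γ u + 1 / (2 * γ u ^ 2)) - z * γ u) = E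
    have hneg : -γ u ≠ 0 := neg_ne_zero.mpr h0
    field_simp
    ring
  rw [intervalIntegral.integral_eq_sub_of_hasDerivAt (fun u _ => hkey u)
    (by
      apply Continuous.intervalIntegrable
      exact (((continuous_const.mul (hc 3)).add (continuous_const.mul (hc 2))).sub
        (continuous_const.mul (hc 1))).sub (hc 0))]
  simp [cfAux, hclosed]

theorem contour_integral_solves_adjoint_ODE
    (β τ : ℝ) (hβ : -1 < β)
    (γ : ℝ → ℂ) (hγ : ContDiff ℝ 1 γ) (hclosed : γ 0 = γ 1)
    (hne : ∀ u, γ u ≠ 0)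
    (hcut : ∀ u, ¬(0 ≤ (γ u).re ∧ (γ u).im = 0))
    (r : ℂ → ℂ)
    (hr : ∀ z : ℂ, r z = ∫ u in (0:ℝ)..1,
      Complex.exp ((β:ℂ) * (Complex.log (-(γ u)) + (Real.pi : ℂ) * Complex.I)) *
        Complex.exp (-(τ:ℂ) / γ u + 1 / (2 * (γ u)^2) - z * γ u) * deriv γ u) :
    ∀ z : ℂ,
      z * iteratedDeriv 3 r z + ((β:ℂ) + 3) * iteratedDeriv 2 r z
        - (τ:ℂ) * deriv r z - r z = 0 := by
  have hmem : ∀ u, -γ u ∈ Complex.slitPlane := by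
    intro u
    rw [Complex.mem_slitPlane_iff]
    rcases not_and_or.mp (hcut u) with h | h
    · left; simpa [Complex.neg_re] using lt_of_not_ge h
    · right; simpa [Complex.neg_im] using h
  have e0 : r = RAux β τ γ 0 := by
    funext w
    rw [hr]
    apply intervalIntegral.integral_congr
    intro u _
    simp only [HAux, pow_zero, one_mul, ← Complex.exp_add]
    congr 2
    simp only [cfAux]
    ring
  have hR := fun k w => RAux_hasDerivAt β τ γ hγ hne hmem k w
  have eD : ∀ k, deriv (RAux β τ γ k) = RAux β τ γ (k+1) :=
    fun k => funext fun w => (hR k w).deriv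
  have e1 : deriv r = RAux β τ γ 1 := by rw [e0, eD 0]
  intro z
  have i2 : iteratedDeriv 2 r = RAux β τ γ 2 := by
    rw [show (2:ℕ) = 1 + 1 from rfl, iteratedDeriv_succ, iteratedDeriv_one, e1, eD 1]
  have i3 : iteratedDeriv 3 r = RAux β τ γ 3 := by
    rw [show (3:ℕ) = 2 + 1 from rfl, iteratedDeriv_succ, i2, eD 2]
  rw [i2, i3, e1, e0]
  exact RAux_combination_eq_zero β τ γ hγ hclosed hne hmem z
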